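/- Let S = ⟨v₀,…,v_h⟩ be a numerical semigroup generated by a characteristic sequence (v₀,…,v_h), with e_k = gcd(v₀,…,v_k) and n_k = e_{k−1}/e_k. Then the conductor of S equals c(S) = Σ_{i=1}^{h} (n_i − 1)·v_i − v₀ + 1. -/

import Mathlib

/-- A numerical semigroup: a subset of ℕ containing 0, closed under addition,
with finite complement. -/
def IsNumericalSemigroup (S : Set ℕ) : Prop :=
  0 ∈ S ∧ (∀ a ∈ S, ∀ b ∈ S, a + b ∈ S) ∧ Sᶜ.Finite

/-- Frobenius number, as an integer (so that F(ℕ) = -1). -/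
noncomputable def Frob (S : Set ℕ) : ℤ :=
  sSup (((fun n : ℕ => (n : ℤ)) '' Sᶜ) ∪ {-1})

/-- Submonoid of ℕ generated by a set. -/
def GenSg (A : Set ℕ) : Set ℕ := (AddSubmonoid.closure A : Set ℕ)

/-- The gluing S ⊕_{d,γ} ℕ = d·S + ℕ·γ. -/
def Gluing (S : Set ℕ) (d γ : ℕ) : Set ℕ :=
  {x | ∃ s ∈ S, ∃ k : ℕ, x = d * s + k * γ}

/-- e_k = gcd(v₀, …, v_k). -/
def ee (v : ℕ → ℕ) (k : ℕ) : ℕ := (Finset.range (k + 1)).gcd v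

/-- (v₀,…,v_h) is a characteristic sequence. -/
def IsCharSeq (h : ℕ) (v : ℕ → ℕ) : Prop :=
  (∀ i ≤ h, 0 < v i) ∧
  (∀ k, 1 ≤ k → k ≤ h → ee v k < ee v (k - 1)) ∧
  ee v h = 1 ∧
  ∀ k, 1 ≤ k → k + 1 ≤ h → ee v (k - 1) * v k < ee v k * v (k + 1)

/-- T is a GSI-semigroup: T = S ⊕_{d,γ} ℕ where S = ⟨A⟩ is a numerical
semigroup, d ≥ 2, gcd(d,γ)=1 and γ > max{d·F(S), d·(max A)}. -/
def IsGSI (T : Set ℕ) : Prop :=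
  ∃ (A : Finset ℕ) (d γ : ℕ), A.Nonempty ∧ 2 ≤ d ∧ Nat.Coprime d γ ∧
    IsNumericalSemigroup (GenSg ↑A) ∧
    (γ : ℤ) > d * Frob (GenSg ↑A) ∧ (∀ a ∈ A, d * a < γ) ∧
    T = Gluing (GenSg ↑A) d γ


lemma frob_set_finite {S : Set ℕ} (hfin : Sᶜ.Finite) :
    (((fun n : ℕ => (n : ℤ)) '' Sᶜ) ∪ ({-1} : Set ℤ)).Finite :=
  (hfin.image _).union (Set.finite_singleton _)

lemma frob_le_of_not_mem {S : Set ℕ} (hfin : Sᶜ.Finite) {n : ℕ} (hn : n ∉ S) :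
    (n : ℤ) ≤ Frob S :=
  le_csSup (frob_set_finite hfin).bddAbove (Or.inl ⟨n, hn, rfl⟩)

lemma mem_of_frob_lt {S : Set ℕ} (hfin : Sᶜ.Finite) {n : ℕ} (hn : Frob S < n) : n ∈ S := by
  by_contra hc; exact absurd (frob_le_of_not_mem hfin hc) (not_le.mpr hn)

lemma neg_one_le_frob {S : Set ℕ} (hfin : Sᶜ.Finite) : (-1 : ℤ) ≤ Frob S :=
  le_csSup (frob_set_finite hfin).bddAbove (Or.inr rfl)

lemma frob_mem {S : Set ℕ} (hfin : Sᶜ.Finite) :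
    Frob S = -1 ∨ ∃ n : ℕ, n ∉ S ∧ (n : ℤ) = Frob S := by
  have h := Set.Nonempty.csSup_mem (s := ((fun n : ℕ => (n : ℤ)) '' Sᶜ) ∪ {-1})
    ⟨-1, Or.inr rfl⟩ (frob_set_finite hfin)
  rcases h with ⟨n, hn, hv⟩ | h
  · exact Or.inr ⟨n, hn, hv⟩
  · exact Or.inl h

lemma Frob_eq {S : Set ℕ} {m : ℤ} (h1 : ∀ n : ℕ, m < n → n ∈ S)
    (h2 : m = -1 ∨ ∃ n : ℕ, n ∉ S ∧ (n : ℤ) = m) : Frob S = m := by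
  apply IsGreatest.csSup_eq
  constructor
  · rcases h2 with rfl | ⟨n, hn, rfl⟩
    · exact Or.inr rfl
    · exact Or.inl ⟨n, hn, rfl⟩
  · rintro x (⟨n, hn, rfl⟩ | rfl)
    · by_contra hc
      exact hn (h1 n (not_le.mp hc))
    · rcases h2 with rfl | ⟨n, _, rfl⟩
      · exact le_refl _
      · omega

lemma ee_zero (v : ℕ → ℕ) : ee v 0 = v 0 := by
  simp [ee, Finset.range_one]

lemma ee_succ (v : ℕ → ℕ) (k : ℕ) : ee v (k + 1) = Nat.gcd (v (k + 1)) (ee v k) := by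
  rw [ee, ee, Finset.range_add_one, Finset.gcd_insert]
  rfl

lemma ee_dvd_v (v : ℕ → ℕ) {i k : ℕ} (h : i ≤ k) : ee v k ∣ v i :=
  Finset.gcd_dvd (Finset.mem_range.mpr (by omega))

lemma ee_dvd_ee (v : ℕ → ℕ) {k l : ℕ} (h : k ≤ l) : ee v l ∣ ee v k := by
  induction l with
  | zero => rw [Nat.le_zero.mp h]
  | succ l ih =>
    rcases Nat.lt_or_ge k (l+1) with h' | h'
    · exact (ee_succ v l ▸ Nat.gcd_dvd_right _ _).trans (ih (by omega))
    · have : k = l + 1 := by omega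
      rw [this]

lemma ee_pos {v : ℕ → ℕ} (h0 : 0 < v 0) (k : ℕ) : 0 < ee v k := by
  rcases Nat.eq_zero_or_pos (ee v k) with h | h
  · exfalso
    have := ee_dvd_v v (Nat.zero_le k)
    rw [h] at this
    omega
  · exact h

lemma gluing_lemma {S : Set ℕ} (hfin : Sᶜ.Finite) {d γ : ℕ}
    (hd : 2 ≤ d) (hcop : Nat.Coprime d γ) (hγ : (d : ℤ) * Frob S < γ) :
    Frob (Gluing S d γ) = d * Frob S + (d - 1) * γ ∧ (Gluing S d γ)ᶜ.Finite := by
  have hγ1 : 1 ≤ γ := by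
    rcases Nat.eq_zero_or_pos γ with rfl | h
    · exfalso; have := hcop; simp [Nat.Coprime] at this; omega
    · exact h
  have hγ1' : (1:ℤ) ≤ γ := by exact_mod_cast hγ1
  have hd' : (2:ℤ) ≤ d := by exact_mod_cast hd
  set F := Frob S with hF
  have hFm1 : (-1 : ℤ) ≤ F := neg_one_le_frob hfin
  set m : ℤ := d * F + (d - 1) * γ with hm
  have hm1 : (-1 : ℤ) ≤ m := by
    rcases lt_or_ge F 0 with h | h
    · have hFe : F = -1 := by omega
      rw [hm, hFe]; nlinarith
    · nlinarith
  have : NeZero d := ⟨by omega⟩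
  -- every n > m is in the gluing
  have hβ : ∀ n : ℕ, m < n → n ∈ Gluing S d γ := by
    intro n hn
    set k : ℕ := (((n : ZMod d)) * ((γ : ZMod d))⁻¹).val with hk
    have hkd : k < d := ZMod.val_lt _
    have hunit : IsUnit ((γ : ZMod d)) := (ZMod.isUnit_iff_coprime γ d).mpr hcop.symm
    have hdvd : (d : ℤ) ∣ (n : ℤ) - k * γ := by
      have hcast : ((k : ℕ) : ZMod d) = (n : ZMod d) * ((γ : ZMod d))⁻¹ :=
        ZMod.natCast_rightInverse _
      rw [← ZMod.intCast_zmod_eq_zero_iff_dvd]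
      push_cast
      rw [hcast, mul_assoc, ZMod.inv_mul_of_unit _ hunit, mul_one, sub_self]
    obtain ⟨t, ht⟩ := hdvd
    have hkd1 : (k : ℤ) ≤ (d : ℤ) - 1 := by push_cast; omega
    have htF : F < t := by
      have h1 : (k : ℤ) * γ ≤ ((d:ℤ) - 1) * γ := by nlinarith
      have h2 : (d:ℤ) * F < d * t := by linarith [hn, ht, h1]
      have hd0 : (0:ℤ) ≤ d := by omega
      exact lt_of_mul_lt_mul_left h2 hd0
    have ht0 : 0 ≤ t := by omega
    have hmem : t.toNat ∈ S := by
      apply mem_of_frob_lt hfin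
      rw [← hF]
      omega
    have heq : (n:ℤ) = d * (t.toNat : ℤ) + k * γ := by
      rw [Int.toNat_of_nonneg ht0]; linarith [ht]
    exact ⟨t.toNat, hmem, k, by exact_mod_cast heq⟩
  constructor
  · apply Frob_eq hβ
    rcases lt_or_ge m 0 with h | h
    · left; omega
    · right
      refine ⟨m.toNat, ?_, by omega⟩
      rintro ⟨s, hs, k, heq⟩
      have heqZ : (d:ℤ) * F + ((d:ℤ) - 1) * γ = (d:ℤ) * s + k * γ := by
        have h2 := congrArg (Nat.cast : ℕ → ℤ) heq
        push_cast at h2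
        rw [Int.toNat_of_nonneg h] at h2
        rw [hm] at h2
        linarith [h2]
      have hdvd : (d : ℤ) ∣ ((k:ℤ) - ((d:ℤ) - 1)) * γ := by
        refine ⟨F - s, ?_⟩
        linear_combination (-1 : ℤ) * heqZ
      have hcopZ : IsCoprime (d : ℤ) (γ : ℤ) := Nat.isCoprime_iff_coprime.mpr hcop
      have hdk : (d : ℤ) ∣ (k:ℤ) - ((d:ℤ) - 1) := hcopZ.dvd_of_dvd_mul_right hdvd
      obtain ⟨j, hj⟩ := hdk
      have hk2 : (k:ℤ) = ((d:ℤ) - 1) + d * j := by linarith [hj]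
      have hs0 : (0:ℤ) ≤ (s:ℤ) := Int.natCast_nonneg s
      have hk0 : (0:ℤ) ≤ (k:ℤ) := Int.natCast_nonneg k
      have hj0 : 0 ≤ j := by
        by_contra hc
        have hjc : j ≤ -1 := by omega
        have : (d:ℤ) * j ≤ (d:ℤ) * (-1) :=
          mul_le_mul_of_nonneg_left hjc (by linarith)
        linarith
      have hdF : (d:ℤ) * F = d * ((s:ℤ) + j * γ) := by
        linear_combination heqZ + (γ:ℤ) * hk2
      have hFs : F = (s:ℤ) + j * γ :=
        mul_left_cancel₀ (by linarith : (d:ℤ) ≠ 0) hdF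
      rcases lt_or_ge 0 j with hj1 | hj1
      · have hjγ : (γ:ℤ) ≤ j * γ := by
          have := mul_le_mul_of_nonneg_right (by linarith : (1:ℤ) ≤ j)
            (by linarith : (0:ℤ) ≤ (γ:ℤ))
          linarith
        have hFγ : (γ:ℤ) ≤ F := by linarith
        have h2F : 2 * F ≤ (d:ℤ) * F :=
          mul_le_mul_of_nonneg_right hd' (by linarith)
        linarith
      · have hj00 : j = 0 := le_antisymm hj1 hj0
        have hFs' : F = (s:ℤ) := by rw [hj00, zero_mul, add_zero] at hFs; exact hFs
        rcases frob_mem hfin with hc | ⟨nn, hnn, hnnF⟩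
        · rw [← hF] at hc; omega
        · rw [← hF] at hnnF
          have hns : nn = s := by omega
          exact hnn (hns ▸ hs)
  · apply Set.Finite.subset (Set.finite_Iic m.toNat)
    intro n hn
    simp only [Set.mem_compl_iff] at hn
    have hmn : (n:ℤ) ≤ m := not_lt.mp (fun hc => hn (hβ n hc))
    simp only [Set.mem_Iic]
    omega

-- the scaled sequence
section desc
variable {h : ℕ} {v : ℕ → ℕ} (hv : IsCharSeq (h + 1) v)

lemma hd2' (hv : IsCharSeq (h + 1) v) : 2 ≤ ee v h := by
  have h1 := hv.2.1 (h+1) (by omega) (by omega)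
  have h2 := hv.2.2.1
  simp only [Nat.add_sub_cancel] at h1
  omega

lemma hdvd' (hv : IsCharSeq (h + 1) v) : ∀ i ≤ h, ee v h * (v i / ee v h) = v i := by
  intro i hi
  exact Nat.mul_div_cancel' (ee_dvd_v v hi)

lemma hee' (hv : IsCharSeq (h + 1) v) :
    ∀ k ≤ h, ee v h * ee (fun i => v i / ee v h) k = ee v k := by
  intro k
  induction k with
  | zero => intro _; rw [ee_zero, ee_zero]; exact hdvd' hv 0 (by omega)
  | succ k ih =>
    intro hk
    rw [ee_succ, ee_succ, ← Nat.gcd_mul_left, hdvd' hv (k+1) hk, ih (by omega)]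

lemma charseq' (hv : IsCharSeq (h + 1) v) : IsCharSeq h (fun i => v i / ee v h) := by
  set d := ee v h with hd
  have hdpos : 0 < d := by have := hd2' hv; omega
  refine ⟨?_, ?_, ?_, ?_⟩
  · intro i hi
    have h1 := hv.1 i (by omega)
    have h2 := hdvd' hv i hi
    by_contra hc
    simp only [Nat.not_lt, Nat.le_zero] at hc
    rw [hc, Nat.mul_zero] at h2
    omega
  · intro k hk1 hkh
    have e1 := hee' hv k (by omega)
    have e2 := hee' hv (k-1) (by omega)
    have := hv.2.1 k hk1 (by omega)
    rw [← e1, ← e2] at this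
    exact Nat.lt_of_mul_lt_mul_left this
  · have := hee' hv h (le_refl h)
    have hd1 : d * 1 = d := by omega
    rw [← hd] at this
    exact Nat.eq_of_mul_eq_mul_left hdpos (by omega)
  · intro k hk1 hkh
    have horig := hv.2.2.2 k hk1 (by omega)
    have e1 := hee' hv (k-1) (by omega)
    have e2 := hee' hv k (by omega)
    have w1 := hdvd' hv k (by omega)
    have w2 := hdvd' hv (k+1) (by omega)
    apply Nat.lt_of_mul_lt_mul_left (a := d * d)
    calc d * d * (ee (fun i => v i / d) (k-1) * ((fun i => v i / d) k))
        = (d * ee (fun i => v i / d) (k-1)) * (d * (v k / d)) := by ring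
      _ = ee v (k-1) * v k := by rw [e1, w1]
      _ < ee v k * v (k+1) := horig
      _ = (d * ee (fun i => v i / d) k) * (d * (v (k+1) / d)) := by rw [e2, w2]
      _ = d * d * (ee (fun i => v i / d) k * ((fun i => v i / d) (k+1))) := by ring

lemma coprime' (hv : IsCharSeq (h + 1) v) : Nat.Coprime (ee v h) (v (h + 1)) := by
  have h2 := hv.2.2.1
  rw [ee_succ] at h2
  exact Nat.Coprime.symm h2

lemma gensg_eq_gluing (hv : IsCharSeq (h + 1) v) :
    GenSg (v '' {i | i ≤ h + 1}) =
      Gluing (GenSg ((fun i => v i / ee v h) '' {i | i ≤ h})) (ee v h) (v (h + 1)) := by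
  set d := ee v h with hd
  set S' := GenSg ((fun i => v i / d) '' {i | i ≤ h}) with hS'
  have hzero : (0 : ℕ) ∈ S' := (AddSubmonoid.closure _).zero_mem
  -- Gluing as an AddSubmonoid
  have hGadd : ∀ a ∈ Gluing S' d (v (h+1)), ∀ b ∈ Gluing S' d (v (h+1)),
      a + b ∈ Gluing S' d (v (h+1)) := by
    rintro a ⟨s1, hs1, k1, rfl⟩ b ⟨s2, hs2, k2, rfl⟩
    exact ⟨s1 + s2, (AddSubmonoid.closure _).add_mem hs1 hs2, k1 + k2, by ring⟩
  apply le_antisymm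
  · have : v '' {i | i ≤ h + 1} ⊆ Gluing S' d (v (h+1)) := by
      rintro x ⟨i, hi, rfl⟩
      simp only [Set.mem_setOf_eq] at hi
      rcases Nat.lt_or_ge i (h+1) with h' | h'
      · refine ⟨v i / d, AddSubmonoid.subset_closure ⟨i, by simp only [Set.mem_setOf_eq]; omega, rfl⟩, 0, ?_⟩
        rw [hdvd' hv i (by omega)]
        ring
      · have : i = h + 1 := by omega
        subst this
        exact ⟨0, hzero, 1, by ring⟩
    intro x hx
    let M : AddSubmonoid ℕ :=
      { carrier := Gluing S' d (v (h+1))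
        add_mem' := fun {a b} ha hb => hGadd a ha b hb
        zero_mem' := ⟨0, hzero, 0, by ring⟩ }
    exact AddSubmonoid.closure_le (S := M) |>.mpr this hx
  · rintro x ⟨s, hs, k, rfl⟩
    have hds : d * s ∈ AddSubmonoid.closure (v '' {i | i ≤ h + 1}) := by
      refine AddSubmonoid.closure_induction
        (motive := fun s _ => d * s ∈ AddSubmonoid.closure (v '' {i | i ≤ h + 1})) ?_ ?_ ?_ hs
      · rintro x ⟨i, hi, rfl⟩
        simp only [Set.mem_setOf_eq] at hi
        have : d * (v i / d) = v i := hdvd' hv i hi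
        rw [this]
        exact AddSubmonoid.subset_closure ⟨i, by simp only [Set.mem_setOf_eq]; omega, rfl⟩
      · exact (AddSubmonoid.closure _).zero_mem
      · intro a b _ _ ha hb
        rw [Nat.mul_add]
        exact (AddSubmonoid.closure _).add_mem ha hb
    have hkγ : k * v (h+1) ∈ AddSubmonoid.closure (v '' {i | i ≤ h + 1}) := by
      have hγ : v (h+1) ∈ AddSubmonoid.closure (v '' {i | i ≤ h + 1}) :=
        AddSubmonoid.subset_closure ⟨h+1, by simp only [Set.mem_setOf_eq]; omega, rfl⟩
      have := AddSubmonoid.nsmul_mem (AddSubmonoid.closure (v '' {i | i ≤ h + 1})) hγ k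
      simpa [smul_eq_mul] using this
    exact (AddSubmonoid.closure _).add_mem hds hkγ
end desc

lemma tele (f : ℕ → ℤ) (n : ℕ) :
    ∑ i ∈ Finset.Icc 1 n, (f (i + 1) - f i) = f (n + 1) - f 1 := by
  induction n with
  | zero => simp
  | succ n ih => rw [Finset.sum_Icc_succ_top (by omega), ih]; ring

lemma main_lemma (h : ℕ) : ∀ v : ℕ → ℕ, IsCharSeq h v →
    (GenSg (v '' {i | i ≤ h}))ᶜ.Finite ∧
    Frob (GenSg (v '' {i | i ≤ h})) =
      (∑ i ∈ Finset.Icc 1 h,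
        (((ee v (i - 1) / ee v i : ℕ) : ℤ) - 1) * (v i : ℤ)) - (v 0 : ℤ) := by
  induction h with
  | zero =>
    intro v hv
    have hv0 : v 0 = 1 := by have := hv.2.2.1; rwa [ee_zero] at this
    have hmem1 : (1 : ℕ) ∈ v '' {i | i ≤ 0} := ⟨0, by simp, hv0⟩
    have hall : ∀ n : ℕ, n ∈ GenSg (v '' {i | i ≤ 0}) := by
      intro n
      have := AddSubmonoid.nsmul_mem (AddSubmonoid.closure (v '' {i | i ≤ 0}))
        (AddSubmonoid.subset_closure hmem1) n
      simpa [smul_eq_mul, GenSg] using this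
    have hS : GenSg (v '' {i | i ≤ 0}) = Set.univ := Set.eq_univ_of_forall hall
    constructor
    · rw [hS]; simp
    · rw [Frob_eq (fun n _ => hall n) (Or.inl rfl)]
      simp [hv0]
  | succ h ih =>
    intro v hv
    set d := ee v h with hd
    have hd2 : 2 ≤ d := hd2' hv
    have hd0 : (0:ℤ) < (d:ℤ) := by exact_mod_cast (by omega : 0 < d)
    set v' : ℕ → ℕ := fun i => v i / d with hv'
    obtain ⟨hfin', hfrob'⟩ := ih v' (charseq' hv)
    set S' := GenSg (v' '' {i | i ≤ h}) with hS'
    -- the quotients agree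
    have hnn : ∀ i, 1 ≤ i → i ≤ h → ee v' (i - 1) / ee v' i = ee v (i - 1) / ee v i := by
      intro i hi1 hih
      have e1 : d * ee v' (i - 1) = ee v (i - 1) := hee' hv (i - 1) (by omega)
      have e2 : d * ee v' i = ee v i := hee' hv i hih
      have hdvd1 : ee v' i ∣ ee v' (i - 1) := ee_dvd_ee v' (by omega)
      have hposv : 0 < ee v i := ee_pos (hv.1 0 (by omega)) i
      have hq : ee v' i * (ee v' (i - 1) / ee v' i) = ee v' (i - 1) :=
        Nat.mul_div_cancel' hdvd1
      have hq2 : ee v i * (ee v' (i - 1) / ee v' i) = ee v (i - 1) := by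
        rw [← e1, ← e2, Nat.mul_assoc, hq]
      rw [← hq2, Nat.mul_div_cancel_left _ hposv]
    -- cast identities
    have hdvi : ∀ i ≤ h, (d : ℤ) * (v' i : ℤ) = (v i : ℤ) := by
      intro i hih
      exact_mod_cast congrArg (Nat.cast : ℕ → ℤ) (hdvd' hv i hih)
    -- d * Frob S' in terms of v
    have hdF : (d : ℤ) * Frob S' =
        (∑ i ∈ Finset.Icc 1 h,
          (((ee v (i - 1) / ee v i : ℕ) : ℤ) - 1) * (v i : ℤ)) - (v 0 : ℤ) := by
      rw [hfrob', mul_sub, Finset.mul_sum]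
      congr 1
      · apply Finset.sum_congr rfl
        intro i hi
        rw [Finset.mem_Icc] at hi
        rw [hnn i hi.1 hi.2]
        have := hdvi i hi.2
        calc (d:ℤ) * ((((ee v (i-1) / ee v i : ℕ) : ℤ) - 1) * (v' i : ℤ))
            = (((ee v (i-1) / ee v i : ℕ) : ℤ) - 1) * ((d:ℤ) * (v' i : ℤ)) := by ring
          _ = (((ee v (i-1) / ee v i : ℕ) : ℤ) - 1) * (v i : ℤ) := by rw [this]
      · exact hdvi 0 (by omega)
    -- key growth inequality
    have hkey : (d : ℤ) * Frob S' < (v (h + 1) : ℤ) := by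
      have hbound : ∀ i ∈ Finset.Icc 1 h,
          (((ee v (i - 1) / ee v i : ℕ) : ℤ) - 1) * (v i : ℤ)
            ≤ (v (i + 1) : ℤ) - (v i : ℤ) := by
        intro i hi
        rw [Finset.mem_Icc] at hi
        have hgrow := hv.2.2.2 i hi.1 (by omega)
        have hdd : ee v i ∣ ee v (i - 1) := ee_dvd_ee v (by omega)
        have hmul : ee v i * (ee v (i - 1) / ee v i) = ee v (i - 1) :=
          Nat.mul_div_cancel' hdd
        have hnv : (ee v (i - 1) / ee v i) * v i < v (i + 1) := by
          apply Nat.lt_of_mul_lt_mul_left (a := ee v i)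
          calc ee v i * ((ee v (i-1) / ee v i) * v i)
              = (ee v i * (ee v (i-1) / ee v i)) * v i := by ring
            _ = ee v (i-1) * v i := by rw [hmul]
            _ < ee v i * v (i+1) := hgrow
        have hnvZ : ((ee v (i - 1) / ee v i : ℕ) : ℤ) * (v i : ℤ) < (v (i + 1) : ℤ) := by
          exact_mod_cast hnv
        nlinarith [hnvZ]
      have hsum : (∑ i ∈ Finset.Icc 1 h,
            (((ee v (i - 1) / ee v i : ℕ) : ℤ) - 1) * (v i : ℤ))
          ≤ (v (h + 1) : ℤ) - (v 1 : ℤ) := by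
        calc (∑ i ∈ Finset.Icc 1 h, (((ee v (i - 1) / ee v i : ℕ) : ℤ) - 1) * (v i : ℤ))
            ≤ ∑ i ∈ Finset.Icc 1 h, ((v (i + 1) : ℤ) - (v i : ℤ)) :=
              Finset.sum_le_sum hbound
          _ = (v (h + 1) : ℤ) - (v 1 : ℤ) := tele (fun i => (v i : ℤ)) h
      have hv0 : 1 ≤ (v 0 : ℤ) := by exact_mod_cast hv.1 0 (by omega)
      have hv1 : 0 ≤ (v 1 : ℤ) := Int.natCast_nonneg _
      rw [hdF]
      linarith
    -- apply the gluing lemma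
    obtain ⟨hfrobT, hfinT⟩ := gluing_lemma hfin' hd2 (coprime' hv) hkey
    rw [gensg_eq_gluing hv]
    refine ⟨hfinT, ?_⟩
    rw [hfrobT, hdF]
    have hlast : ee v ((h + 1) - 1) / ee v (h + 1) = d := by
      have : ee v (h + 1) = 1 := hv.2.2.1
      simp [this, hd]
    rw [Finset.sum_Icc_succ_top (by omega : 1 ≤ h + 1), hlast]
    ring

theorem conductor_of_SI (h : ℕ) (v : ℕ → ℕ) (hv : IsCharSeq h v) :
    Frob (GenSg (v '' {i | i ≤ h})) + 1 =
      (∑ i ∈ Finset.Icc 1 h,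
        (((ee v (i - 1) / ee v i : ℕ) : ℤ) - 1) * (v i : ℤ)) - (v 0 : ℤ) + 1 := by
  rw [(main_lemma h v hv).2]
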